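/- Let Γ be a residually finite countable group, (Γ_i) a sequence of finite-index subgroups with ⋂_{n≥1} ⋃_{i≥n} Γ_i = {e}, and f ∈ ℤΓ invertible in ℓ¹(Γ). Let ρ_n be the uniform probability measure on the finite set Fix(Γ_n, X_f). Then ρ_n converges to the Haar measure μ_f on X_f in the weak* topology. -/

import Mathlib

open scoped BigOperators

/-- Convolution `(g·h)(γ) = ∑ β, g β * h (β⁻¹ γ)` of real functions. -/
noncomputable def convR {Γ : Type*} [Group Γ] (g h : Γ → ℝ) : Γ → ℝ :=
  fun γ => ∑' β : Γ, g β * h (β⁻¹ * γ)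

/-- Indicator of the identity. -/
def deltaE (Γ : Type*) [Group Γ] [DecidableEq Γ] : Γ → ℝ :=
  fun γ => if γ = 1 then 1 else 0

/-- The adjoint `f*` of `f ∈ ℤΓ`: `f*(γ) = f(γ⁻¹)`. -/
def fstar {Γ : Type*} [Group Γ] (f : Γ →₀ ℤ) : Γ →₀ ℤ :=
  Finsupp.equivMapDomain (Equiv.inv Γ) f

/-- Convolution of a `𝕋`-valued function with `g ∈ ℤΓ`:
`(x·g)(γ) = ∑ β, g(β) • x(γ β⁻¹)`. -/
noncomputable def convT {Γ : Type*} [Group Γ] (x : Γ → AddCircle (1 : ℝ))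
    (g : Γ →₀ ℤ) : Γ → AddCircle (1 : ℝ) :=
  fun γ => ∑ β ∈ g.support, g β • x (γ * β⁻¹)

open MeasureTheory Filter
open scoped ENNReal

section Aux
set_option linter.unusedSectionVars false
variable {Γ : Type*} [Group Γ] [DecidableEq Γ]

lemma fstar_apply (f : Γ →₀ ℤ) (γ : Γ) : fstar f γ = f γ⁻¹ := rfl

lemma summ2 {finv : Γ → ℝ} (hfinv : Summable fun γ => ‖finv γ‖)
    {H : Γ → ℝ} {M : ℝ} (hH : ∀ γ, |H γ| ≤ M)
    {j : Γ → Γ} (hj : Function.Injective j) (k : Γ → Γ) :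
    Summable fun g => finv (j g) * H (k g) := by
  refine Summable.of_norm_bounded
    ((hfinv.comp_injective hj).mul_right M) (fun g => ?_)
  rw [norm_mul, Real.norm_eq_abs (H _), Real.norm_eq_abs]
  exact mul_le_mul_of_nonneg_left (hH _) (abs_nonneg _)

lemma bracket1 (f : Γ →₀ ℤ) (finv : Γ → ℝ)
    (h1 : convR (fun γ => (f γ : ℝ)) finv = deltaE Γ) (g : Γ) :
    ∑ β ∈ (fstar f).support, ((fstar f β : ℝ)) * finv (β * g) = deltaE Γ g := by
  have h := congrFun h1 g
  simp only [convR] at h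
  rw [← h, eq_comm, ← Equiv.tsum_eq (Equiv.inv Γ) (fun β => ((f β : ℝ)) * finv (β⁻¹ * g))]
  simp only [Equiv.inv_apply, inv_inv]
  refine (tsum_eq_sum ?_).trans (Finset.sum_congr rfl ?_)
  · intro b hb
    have hb0 : fstar f b = 0 := Finsupp.notMem_support_iff.mp hb
    rw [fstar_apply] at hb0
    simp [hb0]
  · intro b _
    rw [fstar_apply]

lemma bracket2 (f : Γ →₀ ℤ) (finv : Γ → ℝ)
    (h2 : convR finv (fun γ => (f γ : ℝ)) = deltaE Γ) (g : Γ) :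
    ∑ β ∈ (fstar f).support, ((fstar f β : ℝ)) * finv (g * β) = deltaE Γ g := by
  have h := congrFun h2 g
  simp only [convR] at h
  rw [← h, eq_comm, ← Equiv.tsum_eq (Equiv.mulLeft g) (fun v => finv v * ((f (v⁻¹ * g) : ℝ)))]
  have heq : ∀ β : Γ, finv ((Equiv.mulLeft g) β) * ((f (((Equiv.mulLeft g) β)⁻¹ * g) : ℝ))
      = ((fstar f β : ℝ)) * finv (g * β) := by
    intro β
    simp only [Equiv.coe_mulLeft]
    rw [fstar_apply, mul_comm]
    congr 2
    group
  refine (tsum_congr heq).trans ?_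
  refine tsum_eq_sum ?_
  intro b hb
  have hb0 : fstar f b = 0 := Finsupp.notMem_support_iff.mp hb
  simp [hb0]
end Aux

section Aux2
set_option linter.unusedSectionVars false
variable {Γ : Type*} [Group Γ] [DecidableEq Γ]

lemma identA (f : Γ →₀ ℤ) {finv : Γ → ℝ} (hfinv : Summable fun γ => ‖finv γ‖)
    (h1 : convR (fun γ => (f γ : ℝ)) finv = deltaE Γ)
    {H : Γ → ℝ} {M : ℝ} (hH : ∀ γ, |H γ| ≤ M) (γ : Γ) :
    ∑ β ∈ (fstar f).support, ((fstar f β : ℝ)) * (∑' α, finv α * H (γ * β⁻¹ * α)) = H γ := by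
  have step1 : ∀ β : Γ, (∑' α, finv α * H (γ * β⁻¹ * α)) = ∑' g, finv (β * g) * H (γ * g) := by
    intro β
    rw [← Equiv.tsum_eq (Equiv.mulLeft β) (fun α => finv α * H (γ * β⁻¹ * α))]
    refine tsum_congr fun g => ?_
    simp only [Equiv.coe_mulLeft]
    congr 2
    group
  have hsum : ∀ β : Γ, Summable fun g : Γ => ((fstar f β : ℝ)) * (finv (β * g) * H (γ * g)) :=
    fun β => (summ2 hfinv hH (mul_right_injective β) _).mul_left _
  calc ∑ β ∈ (fstar f).support, ((fstar f β : ℝ)) * (∑' α, finv α * H (γ * β⁻¹ * α))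
      = ∑ β ∈ (fstar f).support, ∑' g, ((fstar f β : ℝ)) * (finv (β * g) * H (γ * g)) := by
        refine Finset.sum_congr rfl fun β _ => ?_
        rw [step1 β, tsum_mul_left]
    _ = ∑' g, ∑ β ∈ (fstar f).support, ((fstar f β : ℝ)) * (finv (β * g) * H (γ * g)) :=
        (Summable.tsum_finsetSum (fun β _ => hsum β)).symm
    _ = ∑' g, deltaE Γ g * H (γ * g) := by
        refine tsum_congr fun g => ?_
        rw [← bracket1 f finv h1 g, Finset.sum_mul]
        refine Finset.sum_congr rfl fun β _ => by ring
    _ = H γ := by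
        rw [tsum_eq_single 1 (fun b hb => by simp [deltaE, hb])]
        simp [deltaE]

lemma identB (f : Γ →₀ ℤ) {finv : Γ → ℝ} (hfinv : Summable fun γ => ‖finv γ‖)
    (h2 : convR finv (fun γ => (f γ : ℝ)) = deltaE Γ)
    {H : Γ → ℝ} {M : ℝ} (hH : ∀ γ, |H γ| ≤ M) (γ : Γ) :
    ∑' α, finv α * (∑ β ∈ (fstar f).support, ((fstar f β : ℝ)) * H (γ * α * β⁻¹)) = H γ := by
  have hsum1 : ∀ β : Γ, Summable fun α : Γ => finv α * (((fstar f β : ℝ)) * H (γ * α * β⁻¹)) := by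
    intro β
    exact summ2 hfinv (H := fun δ => ((fstar f β : ℝ)) * H δ) (M := |((fstar f β : ℝ))| * M)
      (fun δ => by rw [abs_mul]; exact mul_le_mul_of_nonneg_left (hH _) (abs_nonneg _))
      Function.injective_id (fun α => γ * α * β⁻¹)
  calc ∑' α, finv α * (∑ β ∈ (fstar f).support, ((fstar f β : ℝ)) * H (γ * α * β⁻¹))
      = ∑' α, ∑ β ∈ (fstar f).support, finv α * (((fstar f β : ℝ)) * H (γ * α * β⁻¹)) := by
        refine tsum_congr fun α => ?_; rw [Finset.mul_sum]
    _ = ∑ β ∈ (fstar f).support, ∑' α, finv α * (((fstar f β : ℝ)) * H (γ * α * β⁻¹)) :=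
        Summable.tsum_finsetSum (fun β _ => hsum1 β)
    _ = ∑ β ∈ (fstar f).support, ∑' g, finv (g * β) * (((fstar f β : ℝ)) * H (γ * g)) := by
        refine Finset.sum_congr rfl fun β _ => ?_
        rw [← Equiv.tsum_eq (Equiv.mulRight β) (fun α => finv α * (((fstar f β : ℝ)) * H (γ * α * β⁻¹)))]
        refine tsum_congr fun g => ?_
        simp only [Equiv.coe_mulRight]
        congr 3
        group
    _ = ∑' g, ∑ β ∈ (fstar f).support, finv (g * β) * (((fstar f β : ℝ)) * H (γ * g)) := by
        refine (Summable.tsum_finsetSum (fun β _ => ?_)).symm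
        exact summ2 hfinv (H := fun δ => ((fstar f β : ℝ)) * H δ) (M := |((fstar f β : ℝ))| * M)
          (fun δ => by rw [abs_mul]; exact mul_le_mul_of_nonneg_left (hH _) (abs_nonneg _))
          (mul_left_injective β) (fun g => γ * g)
    _ = ∑' g, deltaE Γ g * H (γ * g) := by
        refine tsum_congr fun g => ?_
        rw [← bracket2 f finv h2 g, Finset.sum_mul]
        refine Finset.sum_congr rfl fun β _ => by ring
    _ = H γ := by
        rw [tsum_eq_single 1 (fun b hb => by simp [deltaE, hb])]
        simp [deltaE]
end Aux2

open scoped Classical in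
noncomputable def periodize {Γ : Type*} [Group Γ] (hR : Γ → ℝ) (E : Finset Γ) (Λ : Subgroup Γ) : Γ → ℝ :=
  fun γ => ∑ a ∈ E, if a * γ⁻¹ ∈ Λ then hR a else 0

section Aux3
variable {Γ : Type*} [Group Γ] {hR : Γ → ℝ} {E : Finset Γ} {Λ : Subgroup Γ}

lemma periodize_eq (hgood : ∀ a ∈ E, ∀ b ∈ E, a * b⁻¹ ∈ Λ → a = b)
    {a γ : Γ} (ha : a ∈ E) (hm : a * γ⁻¹ ∈ Λ) : periodize hR E Λ γ = hR a := by
  unfold periodize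
  rw [Finset.sum_eq_single_of_mem a ha]
  · rw [if_pos hm]
  · intro b hb hne
    rw [if_neg]
    intro hbm
    refine hne (hgood b hb a ha ?_)
    have h := mul_mem hbm (inv_mem hm)
    rwa [show b * γ⁻¹ * (a * γ⁻¹)⁻¹ = b * a⁻¹ by group] at h

lemma periodize_eq_zero {γ : Γ} (h : ∀ a ∈ E, a * γ⁻¹ ∉ Λ) : periodize hR E Λ γ = 0 :=
  Finset.sum_eq_zero fun a ha => if_neg (h a ha)

lemma periodize_self (hgood : ∀ a ∈ E, ∀ b ∈ E, a * b⁻¹ ∈ Λ → a = b)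
    {γ : Γ} (hγ : γ ∈ E) : periodize hR E Λ γ = hR γ :=
  periodize_eq hgood hγ (by simpa using Λ.one_mem)

lemma abs_periodize_le (hgood : ∀ a ∈ E, ∀ b ∈ E, a * b⁻¹ ∈ Λ → a = b)
    {M : ℝ} (hM : ∀ γ, |hR γ| ≤ M) (hM0 : 0 ≤ M) (γ : Γ) : |periodize hR E Λ γ| ≤ M := by
  by_cases hp : ∃ a ∈ E, a * γ⁻¹ ∈ Λ
  · obtain ⟨a, ha, hm⟩ := hp
    rw [periodize_eq hgood ha hm]; exact hM a
  · push_neg at hp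
    rw [periodize_eq_zero hp]; simpa

lemma periodize_int (hgood : ∀ a ∈ E, ∀ b ∈ E, a * b⁻¹ ∈ Λ → a = b)
    (hint : ∀ γ, ∃ k : ℤ, (k : ℝ) = hR γ) (γ : Γ) :
    ∃ k : ℤ, (k : ℝ) = periodize hR E Λ γ := by
  by_cases hp : ∃ a ∈ E, a * γ⁻¹ ∈ Λ
  · obtain ⟨a, ha, hm⟩ := hp
    rw [periodize_eq hgood ha hm]; exact hint a
  · push_neg at hp
    rw [periodize_eq_zero hp]; exact ⟨0, by simp⟩

lemma periodize_inv {g : Γ} (hg : g ∈ Λ) (γ : Γ) :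
    periodize hR E Λ (g⁻¹ * γ) = periodize hR E Λ γ := by
  unfold periodize
  refine Finset.sum_congr rfl fun a _ => ?_
  rw [show a * (g⁻¹ * γ)⁻¹ = a * γ⁻¹ * g by group]
  have hiff : a * γ⁻¹ * g ∈ Λ ↔ a * γ⁻¹ ∈ Λ := by
    constructor
    · intro h; simpa using mul_mem h (inv_mem hg)
    · intro h; exact mul_mem h hg
  classical
  exact if_congr hiff rfl rfl
end Aux3

lemma coe_int_mul (k : ℤ) (r : ℝ) : (((k:ℝ) * r : ℝ) : AddCircle (1:ℝ)) = k • (r : AddCircle (1:ℝ)) := by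
  rw [← zsmul_eq_mul]
  exact (QuotientAddGroup.mk' (AddSubgroup.zmultiples (1:ℝ))).map_zsmul k r

lemma coe_real_sum {ι : Type*} (s : Finset ι) (g : ι → ℝ) :
    ((∑ i ∈ s, g i : ℝ) : AddCircle (1:ℝ)) = ∑ i ∈ s, ((g i : ℝ) : AddCircle (1:ℝ)) :=
  map_sum (QuotientAddGroup.mk' (AddSubgroup.zmultiples (1:ℝ))) g s

open Filter in
lemma approx_lemma {Γ : Type*} [Group Γ] [Countable Γ] [DecidableEq Γ]
    (f : Γ →₀ ℤ) (finv : Γ → ℝ) (hfinv : Summable fun γ => ‖finv γ‖)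
    (h1 : convR (fun γ => (f γ : ℝ)) finv = deltaE Γ)
    (h2 : convR finv (fun γ => (f γ : ℝ)) = deltaE Γ)
    (Γi : ℕ → Subgroup Γ)
    (hΓlim : (⋂ n, ⋃ i, ⋃ (_ : n ≤ i), ((Γi i : Set Γ))) = {1})
    (y : Γ → AddCircle (1 : ℝ)) (hy : ∀ γ, convT y (fstar f) γ = 0) :
    ∃ z : ℕ → (Γ → AddCircle (1 : ℝ)),
      (∀ i, (∀ γ, convT (z i) (fstar f) γ = 0) ∧ ∀ g ∈ Γi i, ∀ γ, z i (g⁻¹ * γ) = z i γ) ∧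
      (∀ γ, Tendsto (fun i => z i γ) atTop (nhds (y γ))) := by
  classical
  obtain ⟨e, he⟩ := exists_surjective_nat Γ
  set E : ℕ → Finset Γ := fun m => (Finset.range (m+1)).image e with hE
  have hEcover : ∀ g : Γ, ∃ m, ∀ k, m ≤ k → g ∈ E k := by
    intro g; obtain ⟨j, hj⟩ := he g
    exact ⟨j, fun k hk => Finset.mem_image.mpr ⟨j, Finset.mem_range.mpr (Nat.lt_succ_of_le hk), hj⟩⟩
  have hnotin : ∀ γ : Γ, γ ≠ 1 → ∀ᶠ i in atTop, γ ∉ Γi i := by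
    intro γ hγ
    have h0 : γ ∉ (⋂ n, ⋃ i, ⋃ (_ : n ≤ i), ((Γi i : Set Γ))) := by rw [hΓlim]; simpa
    simp only [Set.mem_iInter, Set.mem_iUnion, not_forall, not_exists] at h0
    obtain ⟨n, hn⟩ := h0
    filter_upwards [eventually_ge_atTop n] with i hi
    exact fun hmem => hn i hi hmem
  have hgood_ev : ∀ m, ∀ᶠ i in atTop, ∀ a ∈ E m, ∀ b ∈ E m, a * b⁻¹ ∈ Γi i → a = b := by
    intro m
    rw [Finset.eventually_all]
    intro a ha
    rw [Finset.eventually_all]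
    intro b hb
    by_cases hab : a = b
    · exact Eventually.of_forall fun i _ => hab
    · filter_upwards [hnotin (a * b⁻¹) (by simpa [mul_inv_eq_one] using hab)] with i hi
      exact fun hmem => absurd hmem hi
  have hgood1 : ∀ i : ℕ, ∀ a ∈ E 0, ∀ b ∈ E 0, a * b⁻¹ ∈ Γi i → a = b := by
    intro i a ha b hb _
    obtain ⟨ja, hja, rfl⟩ := Finset.mem_image.mp ha
    obtain ⟨jb, hjb, rfl⟩ := Finset.mem_image.mp hb
    have h1' : ja = 0 := Nat.lt_one_iff.mp (Finset.mem_range.mp hja)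
    have h2' : jb = 0 := Nat.lt_one_iff.mp (Finset.mem_range.mp hjb)
    rw [h1', h2']
  set S : ℕ → Set ℕ := fun i => {m | m ≤ i ∧ ∀ a ∈ E m, ∀ b ∈ E m, a * b⁻¹ ∈ Γi i → a = b} with hS
  have hSbdd : ∀ i, BddAbove (S i) := fun i => ⟨i, fun m hm => hm.1⟩
  set φ : ℕ → ℕ := fun i => sSup (S i) with hφdef
  have hφmem : ∀ i, φ i ∈ S i := fun i => Nat.sSup_mem ⟨0, Nat.zero_le i, hgood1 i⟩ (hSbdd i)
  have hgoodφ : ∀ i, ∀ a ∈ E (φ i), ∀ b ∈ E (φ i), a * b⁻¹ ∈ Γi i → a = b := fun i => (hφmem i).2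
  have hφtend : Tendsto φ atTop atTop := by
    rw [tendsto_atTop]
    intro m
    filter_upwards [hgood_ev m, eventually_ge_atTop m] with i hgi hmi
    exact le_csSup (hSbdd i) ⟨hmi, hgi⟩
  -- the lift of y
  set xt : Γ → ℝ := fun γ => (((AddCircle.equivIco 1 0) (y γ) : Set.Ico (0:ℝ) (0+1)) : ℝ) with hxt
  have hxtq : ∀ γ, ((xt γ : ℝ) : AddCircle (1:ℝ)) = y γ :=
    fun γ => (AddCircle.equivIco 1 0).symm_apply_apply (y γ)
  have hxtb : ∀ γ, |xt γ| ≤ 1 := by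
    intro γ
    have h := ((AddCircle.equivIco 1 0) (y γ)).2
    rw [Set.mem_Ico] at h
    rw [abs_le]
    constructor
    · linarith [h.1]
    · linarith [h.2]
  set hR : Γ → ℝ := fun γ => ∑ β ∈ (fstar f).support, ((fstar f β : ℝ)) * xt (γ * β⁻¹) with hhR
  set M : ℝ := ∑ β ∈ (fstar f).support, |((fstar f β : ℝ))| with hM
  have hM0 : 0 ≤ M := Finset.sum_nonneg fun _ _ => abs_nonneg _
  have hRb : ∀ γ, |hR γ| ≤ M := by
    intro γ
    refine (Finset.abs_sum_le_sum_abs _ _).trans (Finset.sum_le_sum fun β _ => ?_)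
    rw [abs_mul]
    calc |((fstar f β : ℝ))| * |xt (γ*β⁻¹)| ≤ |((fstar f β : ℝ))| * 1 :=
          mul_le_mul_of_nonneg_left (hxtb _) (abs_nonneg _)
      _ = _ := mul_one _
  have hcoe_hR : ∀ γ, ((hR γ : ℝ) : AddCircle (1:ℝ)) = 0 := by
    intro γ
    calc ((hR γ : ℝ) : AddCircle (1:ℝ))
        = ∑ β ∈ (fstar f).support, ((((fstar f β : ℝ)) * xt (γ*β⁻¹) : ℝ) : AddCircle (1:ℝ)) :=
          coe_real_sum _ _
      _ = ∑ β ∈ (fstar f).support, (fstar f β) • y (γ*β⁻¹) := by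
          refine Finset.sum_congr rfl fun β _ => ?_
          rw [coe_int_mul, hxtq]
      _ = convT y (fstar f) γ := rfl
      _ = 0 := hy γ
  have hRint : ∀ γ, ∃ k : ℤ, (k:ℝ) = hR γ := by
    intro γ
    obtain ⟨k, hk⟩ := (AddCircle.coe_eq_zero_iff 1).mp (hcoe_hR γ)
    exact ⟨k, by simpa using hk⟩
  set Hi : ℕ → Γ → ℝ := fun i => periodize hR (E (φ i)) (Γi i) with hHi
  have hHib : ∀ i γ, |Hi i γ| ≤ M := fun i γ => abs_periodize_le (hgoodφ i) hRb hM0 γ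
  have hHiint : ∀ i γ, ∃ k : ℤ, (k:ℝ) = Hi i γ := fun i => periodize_int (hgoodφ i) hRint
  set T : ℕ → Γ → ℝ := fun i γ => ∑' α, finv α * Hi i (γ * α) with hT
  refine ⟨fun i γ => ((T i γ : ℝ) : AddCircle (1:ℝ)), fun i => ⟨?_, ?_⟩, ?_⟩
  · -- in X_f
    intro γ
    have hkey : convT (fun γ => ((T i γ : ℝ) : AddCircle (1:ℝ))) (fstar f) γ
        = ((Hi i γ : ℝ) : AddCircle (1:ℝ)) := by
      calc convT (fun γ => ((T i γ : ℝ) : AddCircle (1:ℝ))) (fstar f) γ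
          = ∑ β ∈ (fstar f).support, (fstar f β) • ((T i (γ * β⁻¹) : ℝ) : AddCircle (1:ℝ)) := rfl
        _ = ∑ β ∈ (fstar f).support, ((((fstar f β : ℝ)) * T i (γ * β⁻¹) : ℝ) : AddCircle (1:ℝ)) := by
            refine Finset.sum_congr rfl fun β _ => ?_
            exact (coe_int_mul _ _).symm
        _ = ((∑ β ∈ (fstar f).support, ((fstar f β : ℝ)) * T i (γ * β⁻¹) : ℝ) : AddCircle (1:ℝ)) :=
            (coe_real_sum _ _).symm
        _ = ((Hi i γ : ℝ) : AddCircle (1:ℝ)) := by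
            congr 1
            exact identA f hfinv h1 (hHib i) γ
    rw [hkey]
    obtain ⟨k, hk⟩ := hHiint i γ
    rw [AddCircle.coe_eq_zero_iff]
    exact ⟨k, by simpa using hk⟩
  · -- invariance
    intro g hg γ
    have : T i (g⁻¹ * γ) = T i γ := by
      simp only [hT]
      refine tsum_congr fun α => ?_
      congr 1
      rw [show (g⁻¹ * γ) * α = g⁻¹ * (γ * α) by group]
      simp only [hHi]
      exact periodize_inv hg (γ * α)
    simp only [this]
  · -- convergence
    intro γ
    have key : Tendsto (fun i => T i γ) atTop (nhds (xt γ)) := by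
      rw [Metric.tendsto_nhds]
      intro ε hε
      have hM1 : (0:ℝ) < 2*M+1 := by linarith
      set ε' := ε / (2*M+1) with hε'
      have hε'pos : 0 < ε' := div_pos hε hM1
      obtain ⟨A, hA⟩ := (Metric.tendsto_nhds.mp
        (tendsto_tsum_compl_atTop_zero (fun α : Γ => ‖finv α‖)) ε' hε'pos).exists
      rw [dist_zero_right, Real.norm_eq_abs,
        abs_of_nonneg (tsum_nonneg fun _ => norm_nonneg _)] at hA
      have hev2 : ∀ᶠ i in atTop, ∀ α ∈ A, γ * α ∈ E (φ i) := by
        rw [Finset.eventually_all]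
        intro α hα
        obtain ⟨m, hm⟩ := hEcover (γ * α)
        filter_upwards [hφtend.eventually_ge_atTop m] with i hi
        exact hm (φ i) hi
      filter_upwards [hev2] with i hi
      rw [Real.dist_eq]
      have hxtsum : xt γ = ∑' α, finv α * hR (γ * α) := by
        have hid := identB f hfinv h2 (M := 1) hxtb γ
        rw [← hid]
      have hS1 : Summable fun α => finv α * Hi i (γ * α) :=
        summ2 hfinv (hHib i) Function.injective_id (fun α => γ * α)
      have hS2 : Summable fun α => finv α * hR (γ * α) :=
        summ2 hfinv hRb Function.injective_id (fun α => γ * α)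
      have hsub : T i γ - xt γ = ∑' α, (finv α * Hi i (γ * α) - finv α * hR (γ * α)) := by
        rw [hxtsum]
        exact ((hS1.hasSum.sub hS2.hasSum).tsum_eq).symm
      have hg0sum : HasSum (fun α => (2*M) * Set.indicator {x : Γ | x ∉ A} (fun α => ‖finv α‖) α)
          ((2*M) * ∑' (α : {x : Γ // x ∉ A}), ‖finv α.1‖) := by
        have hind : Summable (Set.indicator {x : Γ | x ∉ A} fun α => ‖finv α‖) :=
          hfinv.indicator _
        have heq : ∑' (α : {x : Γ // x ∉ A}), ‖finv α.1‖
            = ∑' α, Set.indicator {x : Γ | x ∉ A} (fun α => ‖finv α‖) α :=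
          tsum_subtype {x : Γ | x ∉ A} (fun α => ‖finv α‖)
        rw [heq]
        exact hind.hasSum.mul_left _
      have hbd : ∀ α, ‖finv α * Hi i (γ * α) - finv α * hR (γ * α)‖
          ≤ (2*M) * Set.indicator {x : Γ | x ∉ A} (fun α => ‖finv α‖) α := by
        intro α
        by_cases hmem : α ∈ A
        · have hE' : γ * α ∈ E (φ i) := hi α hmem
          have : Hi i (γ * α) = hR (γ * α) := periodize_self (hgoodφ i) hE'
          rw [this, sub_self, norm_zero, Set.indicator_of_notMem (by simpa using hmem), mul_zero]
        · rw [← mul_sub, norm_mul, Set.indicator_of_mem (by simpa using hmem)]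
          have h2M : ‖Hi i (γ*α) - hR (γ*α)‖ ≤ 2*M := by
            rw [Real.norm_eq_abs]
            calc |Hi i (γ*α) - hR (γ*α)| ≤ |Hi i (γ*α)| + |hR (γ*α)| := abs_sub _ _
              _ ≤ M + M := add_le_add (hHib i _) (hRb _)
              _ = 2*M := by ring
          calc ‖finv α‖ * ‖Hi i (γ*α) - hR (γ*α)‖ ≤ ‖finv α‖ * (2*M) :=
                mul_le_mul_of_nonneg_left h2M (norm_nonneg _)
            _ = 2*M*‖finv α‖ := by ring
      have hfinal : |T i γ - xt γ| ≤ (2*M) * ∑' (α : {x : Γ // x ∉ A}), ‖finv α.1‖ := by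
        rw [hsub, ← Real.norm_eq_abs]
        exact tsum_of_norm_bounded hg0sum hbd
      calc |T i γ - xt γ| ≤ (2*M) * ∑' (α : {x : Γ // x ∉ A}), ‖finv α.1‖ := hfinal
        _ ≤ (2*M) * ε' := mul_le_mul_of_nonneg_left hA.le (by linarith)
        _ < (2*M+1) * ε' := by nlinarith
        _ = ε := by rw [hε']; exact mul_div_cancel₀ _ (ne_of_gt hM1)
    have hcomp := ((AddCircle.continuous_mk' (1:ℝ)).tendsto (xt γ)).comp key
    rw [← hxtq γ]; exact hcomp

/-- Let `Γ` be a countable group, `(Γ_i)` finite-index subgroups with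
`⋂_n ⋃_{i ≥ n} Γ_i = {e}`, and `f ∈ ℤΓ` invertible in `ℓ¹(Γ)`. If `ρ_n` is the
uniform probability measure on the finite set `Fix(Γ_n, X_f)` and `μ_f` is the
Haar probability measure of `X_f`, then `ρ_n → μ_f` weak*. -/
theorem stmt14 {Γ : Type*} [Group Γ] [Countable Γ] [DecidableEq Γ]
    (f : Γ →₀ ℤ) (finv : Γ → ℝ)
    (hfinv : Summable fun γ => ‖finv γ‖)
    (h1 : convR (fun γ => (f γ : ℝ)) finv = deltaE Γ)
    (h2 : convR finv (fun γ => (f γ : ℝ)) = deltaE Γ)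
    (Γi : ℕ → Subgroup Γ) (hΓfi : ∀ i, (Γi i).FiniteIndex)
    (hΓlim : (⋂ n, ⋃ i, ⋃ (_ : n ≤ i), ((Γi i : Set Γ))) = {1})
    (Fixn : ℕ → Set (Γ → AddCircle (1 : ℝ)))
    (hFixn : ∀ n, Fixn n = {x | (∀ γ, convT x (fstar f) γ = 0) ∧
        ∀ g ∈ Γi n, ∀ γ, x (g⁻¹ * γ) = x γ})
    (ρ : ℕ → Measure (Γ → AddCircle (1 : ℝ))) (hρp : ∀ n, IsProbabilityMeasure (ρ n))
    (hρ : ∀ (n : ℕ) (E : Set (Γ → AddCircle (1 : ℝ))), MeasurableSet E →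
      ρ n E = ((Fixn n ∩ E).ncard : ℝ≥0∞) / ((Fixn n).ncard : ℝ≥0∞))
    (μf : Measure (Γ → AddCircle (1 : ℝ))) (hμfp : IsProbabilityMeasure μf)
    (hsupp : μf {x | ∀ γ, convT x (fstar f) γ = 0} = 1)
    (hinv : ∀ z : Γ → AddCircle (1 : ℝ), (∀ γ, convT z (fstar f) γ = 0) →
      μf.map (fun x => x + z) = μf) :
    ∀ c : C(Γ → AddCircle (1 : ℝ), ℝ),
      Tendsto (fun n => ∫ x, c x ∂(ρ n)) atTop (nhds (∫ y, c y ∂μf)) := by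
  classical
  intro c
  -- L1 : finiteness and nonemptiness of Fixn
  have hfin : ∀ n, (Fixn n).Finite ∧ (Fixn n).Nonempty := by
    intro n
    by_contra hcon
    have h0 : (Fixn n).ncard = 0 := by
      rcases not_and_or.mp hcon with h | h
      · exact Set.Infinite.ncard h
      · rw [Set.not_nonempty_iff_eq_empty] at h
        simp [h]
    have hu := hρ n Set.univ MeasurableSet.univ
    rw [Set.inter_univ, h0] at hu
    simp only [Nat.cast_zero, ENNReal.div_zero] at hu
    have h1' := (hρp n).measure_univ
    rw [hu] at h1'
    simp at h1'
  set F : ℕ → Finset (Γ → AddCircle (1:ℝ)) := fun n => (hfin n).1.toFinset with hF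
  have hFmem : ∀ n x, x ∈ F n ↔ x ∈ Fixn n := fun n x => Set.Finite.mem_toFinset _
  have hFcard : ∀ n, (Fixn n).ncard = (F n).card :=
    fun n => Set.ncard_eq_toFinset_card _ (hfin n).1
  have hcard_pos : ∀ n, 0 < (F n).card := by
    intro n
    rw [Finset.card_pos]
    exact ⟨(hfin n).2.some, (hFmem n _).mpr (hfin n).2.some_mem⟩
  have hNne : ∀ n, ((F n).card : ℝ) ≠ 0 := fun n => Nat.cast_ne_zero.mpr (hcard_pos n).ne'
  -- measure characterization
  have hρeq : ∀ n, ρ n = (((F n).card : ℝ≥0∞))⁻¹ • ∑ p ∈ F n, Measure.dirac p := by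
    intro n
    ext E hE
    rw [hρ n E hE, Measure.smul_apply, smul_eq_mul]
    have hsum : (∑ p ∈ F n, Measure.dirac p) E = ∑ p ∈ F n, Measure.dirac p E := by
      rw [Measure.coe_finset_sum]
      exact Finset.sum_apply _ _ _
    rw [hsum]
    have hdirac : ∀ p : Γ → AddCircle (1:ℝ), Measure.dirac p E = if p ∈ E then 1 else 0 := by
      intro p
      rw [Measure.dirac_apply' p hE]
      simp [Set.indicator]
    rw [Finset.sum_congr rfl fun p _ => hdirac p, Finset.sum_boole]
    have hinter : (Fixn n ∩ E).ncard = ((F n).filter (fun p => p ∈ E)).card := by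
      rw [Set.ncard_eq_toFinset_card _ ((hfin n).1.inter_of_left E)]
      congr 1
      ext x
      simp only [Set.Finite.mem_toFinset, Set.mem_inter_iff, Finset.mem_filter, hFmem]
    rw [hinter, ← hFcard n, hFcard n, div_eq_mul_inv, mul_comm]
  -- integral formula
  have hint : ∀ n (g : (Γ → AddCircle (1:ℝ)) → ℝ), Continuous g →
      ∫ x, g x ∂(ρ n) = ((F n).card : ℝ)⁻¹ * ∑ p ∈ F n, g p := by
    intro n g hg
    rw [hρeq n, integral_smul_measure,
      integral_finset_sum_measure (fun p _ =>
        hg.integrable_of_hasCompactSupport (HasCompactSupport.of_compactSpace g))]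
    simp_rw [integral_dirac]
    rw [ENNReal.toReal_inv, ENNReal.toReal_natCast, smul_eq_mul]
  -- group structure of Fixn
  have hmemadd : ∀ n, ∀ p ∈ Fixn n, ∀ z ∈ Fixn n, p + z ∈ Fixn n := by
    intro n p hp z hz
    rw [hFixn n] at hp hz ⊢
    constructor
    · intro γ
      have hh : convT (p + z) (fstar f) γ = convT p (fstar f) γ + convT z (fstar f) γ := by
        simp [convT, smul_add, Finset.sum_add_distrib]
      rw [hh, hp.1 γ, hz.1 γ, add_zero]
    · intro g hg γ
      simp only [Pi.add_apply, hp.2 g hg γ, hz.2 g hg γ]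
  have hmemneg : ∀ n, ∀ p ∈ Fixn n, -p ∈ Fixn n := by
    intro n p hp
    rw [hFixn n] at hp ⊢
    constructor
    · intro γ
      have hh : convT (-p) (fstar f) γ = - convT p (fstar f) γ := by
        simp [convT, smul_neg, ← Finset.sum_neg_distrib]
      rw [hh, hp.1 γ, neg_zero]
    · intro g hg γ
      simp only [Pi.neg_apply, hp.2 g hg γ]
  have hreindex : ∀ n, ∀ z, z ∈ Fixn n → ∀ (g : (Γ → AddCircle (1:ℝ)) → ℝ),
      ∑ p ∈ F n, g (p + z) = ∑ p ∈ F n, g p := by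
    intro n z hz g
    refine Finset.sum_nbij' (fun p => p + z) (fun q => q - z) ?_ ?_ ?_ ?_ ?_
    · intro a ha
      rw [hFmem] at ha ⊢
      exact hmemadd n a ha z hz
    · intro a ha
      rw [hFmem] at ha ⊢
      show a - z ∈ Fixn n
      rw [sub_eq_add_neg]
      exact hmemadd n a ha (-z) (hmemneg n z hz)
    · intro a _
      exact add_sub_cancel_right a z
    · intro a _
      exact sub_add_cancel a z
    · intro a _
      rfl
  -- translation modulus
  set Φ : C(Γ → AddCircle (1:ℝ), C(Γ → AddCircle (1:ℝ), ℝ)) :=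
    ContinuousMap.curry ⟨fun p => c (p.2 + p.1),
      c.continuous.comp (continuous_snd.add continuous_fst)⟩ with hΦ
  have hΦapp : ∀ t x, Φ t x = c (x + t) := fun t x => rfl
  set K : (Γ → AddCircle (1:ℝ)) → ℝ := fun t => ‖Φ t - Φ 0‖ with hK
  have hKcont : Continuous K := (Φ.continuous.sub continuous_const).norm
  have hK0 : K 0 = 0 := by simp [hK]
  have hKbound : ∀ t x, |c (x + t) - c x| ≤ K t := by
    intro t x
    have h := ContinuousMap.norm_coe_le_norm (Φ t - Φ 0) x
    calc |c (x + t) - c x| = ‖(Φ t - Φ 0) x‖ := by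
          rw [ContinuousMap.sub_apply, hΦapp, hΦapp, add_zero, Real.norm_eq_abs]
      _ ≤ K t := h
  -- a.e. membership in X_f
  have hconvTcont : ∀ γ, Continuous fun x : Γ → AddCircle (1:ℝ) => convT x (fstar f) γ := by
    intro γ
    unfold convT
    exact continuous_finset_sum _ fun β _ => (continuous_zsmul _).comp (continuous_apply _)
  have hXfclosed : IsClosed {x : Γ → AddCircle (1:ℝ) | ∀ γ, convT x (fstar f) γ = 0} := by
    have hh : {x : Γ → AddCircle (1:ℝ) | ∀ γ, convT x (fstar f) γ = 0}
        = ⋂ γ, (fun x => convT x (fstar f) γ) ⁻¹' {0} := by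
      ext x; simp [Set.mem_iInter]
    rw [hh]
    exact isClosed_iInter fun γ => IsClosed.preimage (hconvTcont γ) isClosed_singleton
  have hae : ∀ᵐ x ∂μf, ∀ γ, convT x (fstar f) γ = 0 := by
    have hc : μf ({x : Γ → AddCircle (1:ℝ) | ∀ γ, convT x (fstar f) γ = 0}ᶜ) = 0 := by
      rw [measure_compl hXfclosed.measurableSet (measure_ne_top μf _), hsupp,
        hμfp.measure_univ, tsub_self]
    exact hc
  -- the comparison functions
  set G : ℕ → (Γ → AddCircle (1:ℝ)) → ℝ :=
    fun n y => ((F n).card : ℝ)⁻¹ * ∑ p ∈ F n, (c p - c (p + y)) with hG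
  have hGcont : ∀ n, Continuous (G n) := by
    intro n
    refine continuous_const.mul (continuous_finset_sum _ fun p _ => ?_)
    exact continuous_const.sub (c.continuous.comp (continuous_const.add continuous_id))
  have hE1 : ∀ n, ∫ x, G n x ∂μf = (∫ x, c x ∂(ρ n)) - ∫ x, c x ∂μf := by
    intro n
    have hintble : ∀ p : Γ → AddCircle (1:ℝ), Integrable (fun y => c p - c (p + y)) μf := by
      intro p
      exact (continuous_const.sub (c.continuous.comp
        (continuous_const.add continuous_id))).integrable_of_hasCompactSupport
        (HasCompactSupport.of_compactSpace _)
    have hintble2 : ∀ p : Γ → AddCircle (1:ℝ), Integrable (fun y => c (p + y)) μf := by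
      intro p
      exact (c.continuous.comp
        (continuous_const.add continuous_id)).integrable_of_hasCompactSupport
        (HasCompactSupport.of_compactSpace _)
    calc ∫ x, G n x ∂μf
        = ((F n).card : ℝ)⁻¹ * ∫ x, ∑ p ∈ F n, (c p - c (p + x)) ∂μf := integral_const_mul _ _
      _ = ((F n).card : ℝ)⁻¹ * ∑ p ∈ F n, ∫ x, (c p - c (p + x)) ∂μf := by
          rw [integral_finset_sum _ (fun p _ => hintble p)]
      _ = ((F n).card : ℝ)⁻¹ * ∑ p ∈ F n, (c p - ∫ x, c x ∂μf) := by
          congr 1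
          refine Finset.sum_congr rfl fun p hp => ?_
          rw [integral_sub (integrable_const _) (hintble2 p)]
          congr 1
          · simp [hμfp.measure_univ]
          · have hp' : ∀ γ, convT p (fstar f) γ = 0 := by
              have hmem := (hFmem n p).mp hp
              rw [hFixn n] at hmem
              exact hmem.1
            have hmap := hinv p hp'
            calc ∫ x, c (p + x) ∂μf = ∫ x, c (x + p) ∂μf := by simp only [add_comm p]
              _ = ∫ x, c x ∂(μf.map (fun x => x + p)) :=
                  (integral_map ((continuous_id.add continuous_const).measurable.aemeasurable)
                    c.continuous.aestronglyMeasurable).symm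
              _ = ∫ x, c x ∂μf := by rw [hmap]
      _ = ((F n).card : ℝ)⁻¹ * ∑ p ∈ F n, c p - ∫ x, c x ∂μf := by
          rw [Finset.sum_sub_distrib, Finset.sum_const, mul_sub]
          congr 1
          rw [nsmul_eq_mul, ← mul_assoc, inv_mul_cancel₀ (hNne n), one_mul]
      _ = (∫ x, c x ∂(ρ n)) - ∫ x, c x ∂μf := by rw [hint n c c.continuous]
  have hE2 : Tendsto (fun n => ∫ x, G n x ∂μf) atTop (nhds 0) := by
    have h0 : (0:ℝ) = ∫ _x, (0:ℝ) ∂μf := by simp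
    rw [h0]
    refine tendsto_integral_of_dominated_convergence (fun _ => 2 * ‖c‖)
      (fun n => (hGcont n).aestronglyMeasurable) (integrable_const _) ?_ ?_
    · intro n
      refine Eventually.of_forall fun y => ?_
      rw [hG]
      simp only []
      rw [Real.norm_eq_abs, abs_mul, abs_inv, Nat.abs_cast]
      have habs : |∑ p ∈ F n, (c p - c (p + y))| ≤ ((F n).card : ℝ) * (2*‖c‖) := by
        refine (Finset.abs_sum_le_sum_abs _ _).trans ?_
        calc ∑ p ∈ F n, |c p - c (p + y)| ≤ ∑ _p ∈ F n, 2*‖c‖ := by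
              refine Finset.sum_le_sum fun p _ => ?_
              calc |c p - c (p + y)| ≤ |c p| + |c (p + y)| := abs_sub _ _
                _ ≤ ‖c‖ + ‖c‖ := add_le_add
                    (by rw [← Real.norm_eq_abs]; exact c.norm_coe_le_norm p)
                    (by rw [← Real.norm_eq_abs]; exact c.norm_coe_le_norm _)
                _ = 2*‖c‖ := by ring
          _ = ((F n).card : ℝ) * (2*‖c‖) := by rw [Finset.sum_const, nsmul_eq_mul]
      calc ((F n).card : ℝ)⁻¹ * |∑ p ∈ F n, (c p - c (p + y))|
          ≤ ((F n).card : ℝ)⁻¹ * (((F n).card : ℝ) * (2*‖c‖)) :=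
            mul_le_mul_of_nonneg_left habs (inv_nonneg.mpr (Nat.cast_nonneg _))
        _ = 2*‖c‖ := by rw [← mul_assoc, inv_mul_cancel₀ (hNne n), one_mul]
    · filter_upwards [hae] with y hy
      obtain ⟨z, hzmem, hztend⟩ := approx_lemma f finv hfinv h1 h2 Γi hΓlim y hy
      have hzFix : ∀ n, z n ∈ Fixn n := by
        intro n
        rw [hFixn n]
        exact hzmem n
      have hGeq : ∀ n, G n y = ((F n).card : ℝ)⁻¹ * ∑ p ∈ F n, (c p - c (p + (y - z n))) := by
        intro n
        rw [hG]
        simp only []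
        congr 1
        have key : ∑ p ∈ F n, c (p + y) = ∑ p ∈ F n, c (p + (y - z n)) := by
          have hre := hreindex n (z n) (hzFix n) (fun q => c (q + (y - z n)))
          calc ∑ p ∈ F n, c (p + y) = ∑ p ∈ F n, c ((p + z n) + (y - z n)) := by
                refine Finset.sum_congr rfl fun p _ => ?_
                congr 1
                abel
            _ = ∑ p ∈ F n, c (p + (y - z n)) := hre
        rw [Finset.sum_sub_distrib, Finset.sum_sub_distrib, key]
      have hbound2 : ∀ n, ‖G n y‖ ≤ K (y - z n) := by
        intro n
        rw [hGeq n, Real.norm_eq_abs, abs_mul, abs_inv, Nat.abs_cast]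
        have habs : |∑ p ∈ F n, (c p - c (p + (y - z n)))| ≤ ((F n).card : ℝ) * K (y - z n) := by
          refine (Finset.abs_sum_le_sum_abs _ _).trans ?_
          calc ∑ p ∈ F n, |c p - c (p + (y - z n))| ≤ ∑ _p ∈ F n, K (y - z n) := by
                refine Finset.sum_le_sum fun p _ => ?_
                rw [abs_sub_comm]
                exact hKbound (y - z n) p
            _ = ((F n).card : ℝ) * K (y - z n) := by rw [Finset.sum_const, nsmul_eq_mul]
        calc ((F n).card : ℝ)⁻¹ * |∑ p ∈ F n, (c p - c (p + (y - z n)))|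
            ≤ ((F n).card : ℝ)⁻¹ * (((F n).card : ℝ) * K (y - z n)) :=
              mul_le_mul_of_nonneg_left habs (inv_nonneg.mpr (Nat.cast_nonneg _))
          _ = K (y - z n) := by rw [← mul_assoc, inv_mul_cancel₀ (hNne n), one_mul]
      have htzero : Tendsto (fun n => y - z n) atTop (nhds 0) := by
        rw [tendsto_pi_nhds]
        intro γ
        have hh : Tendsto (fun n => y γ - z n γ) atTop (nhds (y γ - y γ)) :=
          tendsto_const_nhds.sub (hztend γ)
        simpa using hh
      have hKz : Tendsto (fun n => K (y - z n)) atTop (nhds 0) := by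
        have hh := (hKcont.tendsto 0).comp htzero
        rwa [hK0] at hh
      exact squeeze_zero_norm hbound2 hKz
  have hfinal : (fun n => ∫ x, c x ∂(ρ n)) = fun n => (∫ x, G n x ∂μf) + ∫ x, c x ∂μf := by
    funext n
    rw [hE1 n]
    ring
  rw [hfinal]
  have hh := hE2.add (tendsto_const_nhds (x := ∫ x, c x ∂μf) (f := atTop))
  simpa using hh
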